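/- arXiv:1712.08812 — 10 statements merged into one kernel-verified Lean document; each statement's English description precedes it below -/
import Mathlib

section
/- Let β, γ ∈ ℤ and define M(x,y,z) as the 3×3 matrix with rows [(γ²−γ+1−β²)(x−z)+βy+z, β(x−z)−γy, (β²−γ²+γ)(x−z)−βy], [−β(2γ−1)(x−z)+γy, γ(x−z)+βy+z, β(2γ−1)(x−z)+(1−γ)y], [(β²+γ²−γ)(x−z)−βy, −β(x−z)+(1−γ)y, −(β²+γ²−γ)(x−z)+βy+z]. Then for any Pythagorean triples a and b, the triple M(a).b (matrix–vector product) is a Pythagorean triple. -/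
def M (β γ : ℤ) (x y z : ℤ) : Matrix (Fin 3) (Fin 3) ℤ :=
  !![(γ^2 - γ + 1 - β^2)*(x - z) + β*y + z, β*(x - z) - γ*y, (β^2 - γ^2 + γ)*(x - z) - β*y;
     -β*(2*γ - 1)*(x - z) + γ*y, γ*(x - z) + β*y + z, β*(2*γ - 1)*(x - z) + (1 - γ)*y;
     (β^2 + γ^2 - γ)*(x - z) - β*y, -β*(x - z) + (1 - γ)*y, -(β^2 + γ^2 - γ)*(x - z) + β*y + z]

def Mv (β γ : ℤ) (a : Fin 3 → ℤ) : Matrix (Fin 3) (Fin 3) ℤ := M β γ (a 0) (a 1) (a 2)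

def bul (β γ : ℤ) (a b : Fin 3 → ℤ) : Fin 3 → ℤ := (Mv β γ a).mulVec b

theorem stmt_2 (β γ : ℤ) (a b : Fin 3 → ℤ)
    (ha : (a 0)^2 + (a 1)^2 = (a 2)^2) (hb : (b 0)^2 + (b 1)^2 = (b 2)^2) :
    (bul β γ a b 0)^2 + (bul β γ a b 1)^2 = (bul β γ a b 2)^2 := by
  simp only [bul, Mv, M, Matrix.mulVec, dotProduct, Fin.sum_univ_three,
    Matrix.cons_val', Matrix.cons_val_zero, Matrix.cons_val_one, Matrix.head_cons,
    Matrix.empty_val', Matrix.cons_val_fin_one, Matrix.head_fin_const,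
    Matrix.cons_val_two, Matrix.tail_cons, Matrix.of_apply]
  linear_combination ((b 2)^2 - (b 1)^2 - 2*γ*(b 2)^2 + 2*γ*(b 1)^2 + 2*γ*(b 0)*(b 2) + 2*γ^2*(b 2)^2 - γ^2*(b 1)^2 - 2*γ^2*(b 0)*(b 2) + 2*β*(b 0)*(b 1) + 2*β*γ*(b 1)*(b 2) - 2*β*γ*(b 0)*(b 1) + β^2*(b 2)^2 - β^2*(b 0)^2) * ha + ((a 0)^2 + 2*γ*(a 0)*(a 2) - 2*γ*(a 0)^2 + γ^2*(a 1)^2 - 2*γ^2*(a 0)*(a 2) + 2*γ^2*(a 0)^2 + 2*β*(a 0)*(a 1) + 2*β*γ*(a 1)*(a 2) - 2*β*γ*(a 0)*(a 1) + β^2*(a 1)^2) * hb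
end

section
/- For all β, γ ∈ ℤ and all triples a, b ∈ ℤ³, M_{β,γ}(a).b = M_{β,γ}(b).a (the product induced by M_{β,γ} is commutative). -/
theorem stmt_4 (β γ : ℤ) (a b : Fin 3 → ℤ) :
    (Mv β γ a).mulVec b = (Mv β γ b).mulVec a := by
  funext i
  fin_cases i <;>
    simp [Mv, M, Matrix.mulVec, dotProduct, Fin.sum_univ_three] <;> ring
end

section
/- For all β, γ ∈ ℤ and all triples a, b ∈ ℤ³, M_{β,γ}(M_{β,γ}(a).b) = M_{β,γ}(a).M_{β,γ}(b) (compatibility of the injection with matrix multiplication). -/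
theorem stmt_5 (β γ : ℤ) (a b : Fin 3 → ℤ) :
    Mv β γ ((Mv β γ a).mulVec b) = Mv β γ a * Mv β γ b := by
  ext i j
  fin_cases i <;> fin_cases j <;>
    simp [Mv, M, Matrix.mulVec, Matrix.mul_apply, Fin.sum_univ_three, dotProduct] <;>
    ring
end

section
/- The operation a •_{β,γ} b := M_{β,γ}(a).b makes ℤ³ a commutative monoid with identity (1,0,1), for any fixed β, γ ∈ ℤ. -/
theorem stmt_6 (β γ : ℤ) :
    (∀ a b c : Fin 3 → ℤ, bul β γ (bul β γ a b) c = bul β γ a (bul β γ b c)) ∧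
    (∀ a b : Fin 3 → ℤ, bul β γ a b = bul β γ b a) ∧
    (∀ a : Fin 3 → ℤ, bul β γ ![1, 0, 1] a = a) ∧
    (∀ a : Fin 3 → ℤ, bul β γ a ![1, 0, 1] = a) := by
  refine ⟨fun a b c => ?_, fun a b => ?_, fun a => ?_, fun a => ?_⟩ <;>
    funext i <;> fin_cases i <;>
    simp [bul, Mv, M, Matrix.mulVec, dotProduct, Fin.sum_univ_three] <;> ring
end

section
/- The set of Pythagorean triples {(x,y,z) ∈ ℤ³ : x²+y²=z²} is closed under the operation a •_{β,γ} b := M_{β,γ}(a).b and forms a commutative submonoid of (ℤ³, •_{β,γ}) with identity (1,0,1). -/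
def Pyth : Set (Fin 3 → ℤ) := {a | (a 0)^2 + (a 1)^2 = (a 2)^2}

lemma bul_apply (β γ : ℤ) (a b : Fin 3 → ℤ) :
    bul β γ a b =
      ![((γ^2 - γ + 1 - β^2)*(a 0 - a 2) + β*(a 1) + a 2)*(b 0) + (β*(a 0 - a 2) - γ*(a 1))*(b 1)
          + ((β^2 - γ^2 + γ)*(a 0 - a 2) - β*(a 1))*(b 2),
        (-β*(2*γ - 1)*(a 0 - a 2) + γ*(a 1))*(b 0) + (γ*(a 0 - a 2) + β*(a 1) + a 2)*(b 1)
          + (β*(2*γ - 1)*(a 0 - a 2) + (1 - γ)*(a 1))*(b 2),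
        ((β^2 + γ^2 - γ)*(a 0 - a 2) - β*(a 1))*(b 0) + (-β*(a 0 - a 2) + (1 - γ)*(a 1))*(b 1)
          + (-(β^2 + γ^2 - γ)*(a 0 - a 2) + β*(a 1) + a 2)*(b 2)] := by
  funext i
  fin_cases i <;>
    simp [bul, Mv, M, Matrix.mulVec, dotProduct, Fin.sum_univ_three]

lemma cons3_eq {A B C D E F : ℤ} (h1 : A = D) (h2 : B = E) (h3 : C = F) :
    (![A,B,C] : Fin 3 → ℤ) = ![D,E,F] := by subst h1 h2 h3; rfl

lemma eta3 (a : Fin 3 → ℤ) : a = ![a 0, a 1, a 2] := by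
  funext i; fin_cases i <;> rfl

set_option maxHeartbeats 4000000 in
theorem stmt_7 (β γ : ℤ) :
    (∀ a ∈ Pyth, ∀ b ∈ Pyth, bul β γ a b ∈ Pyth) ∧
    (![1, 0, 1] : Fin 3 → ℤ) ∈ Pyth ∧
    (∀ a ∈ Pyth, ∀ b ∈ Pyth, ∀ c ∈ Pyth,
      bul β γ (bul β γ a b) c = bul β γ a (bul β γ b c)) ∧
    (∀ a ∈ Pyth, ∀ b ∈ Pyth, bul β γ a b = bul β γ b a) ∧
    (∀ a ∈ Pyth, bul β γ ![1, 0, 1] a = a) ∧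
    (∀ a ∈ Pyth, bul β γ a ![1, 0, 1] = a) := by
  refine ⟨?_, ?_, ?_, ?_, ?_, ?_⟩
  · intro a ha b hb
    simp only [Pyth, Set.mem_setOf_eq] at *
    rw [bul_apply]
    simp only [Matrix.cons_val_zero, Matrix.cons_val_one, Matrix.head_cons,
      Matrix.cons_val_two, Matrix.tail_cons]
    linear_combination
      ((b 2)^2 - (b 1)^2 - 2*γ*(b 2)^2 + 2*γ*(b 1)^2 + 2*γ*(b 0)*(b 2) + 2*γ^2*(b 2)^2
        - γ^2*(b 1)^2 - 2*γ^2*(b 0)*(b 2) + 2*β*(b 0)*(b 1) + 2*β*γ*(b 1)*(b 2)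
        - 2*β*γ*(b 0)*(b 1) + β^2*(b 2)^2 - β^2*(b 0)^2) * ha +
      ((a 0)^2 + 2*γ*(a 0)*(a 2) - 2*γ*(a 0)^2 + γ^2*(a 1)^2 - 2*γ^2*(a 0)*(a 2)
        + 2*γ^2*(a 0)^2 + 2*β*(a 0)*(a 1) + 2*β*γ*(a 1)*(a 2) - 2*β*γ*(a 0)*(a 1)
        + β^2*(a 1)^2) * hb
  · simp [Pyth]
  · intro a _ b _ c _
    rw [bul_apply β γ a b, bul_apply β γ b c, bul_apply, bul_apply]
    simp only [Matrix.cons_val_zero, Matrix.cons_val_one, Matrix.head_cons,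
      Matrix.cons_val_two, Matrix.tail_cons]
    exact cons3_eq (by ring) (by ring) (by ring)
  · intro a _ b _
    rw [bul_apply, bul_apply]
    exact cons3_eq (by ring) (by ring) (by ring)
  · intro a _
    rw [bul_apply]
    simp only [Matrix.cons_val_zero, Matrix.cons_val_one, Matrix.head_cons,
      Matrix.cons_val_two, Matrix.tail_cons]
    conv_rhs => rw [eta3 a]
    exact cons3_eq (by ring) (by ring) (by ring)
  · intro a _
    rw [bul_apply]
    simp only [Matrix.cons_val_zero, Matrix.cons_val_one, Matrix.head_cons,
      Matrix.cons_val_two, Matrix.tail_cons]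
    conv_rhs => rw [eta3 a]
    exact cons3_eq (by ring) (by ring) (by ring)
end

section
/- For a Pythagorean triple (x,y,z), the matrix B₁ = [[x,0,0],[0,z,y],[0,y,z]] is Pythagorean-triple-preserving: for any Pythagorean triple (a,b,c), B₁.(a,b,c) is a Pythagorean triple. -/
theorem stmt_8 (x y z a b c : ℤ) (h1 : x^2 + y^2 = z^2) (h2 : a^2 + b^2 = c^2) :
    (x*a)^2 + (z*b + y*c)^2 = (y*b + z*c)^2 := by
  nlinarith [sq_nonneg x, sq_nonneg y]
end

section
/- Define, for parameters β, γ ∈ ℤ, the operation (u,v) *_{β,γ} (s,t) = (su + tv(1−2γ), tu + sv + 2βtv) on ℤ², and let M_{β,γ}(u,v) be the matrix obtained from the Pythagorean-triple-preserving family evaluated at (u²−v², 2uv, u²+v²). Then M_{β,γ}(u,v) · M_{β,γ}(s,t) = M_{β,γ}((u,v) *_{β,γ} (s,t)) for all (u,v), (s,t) ∈ ℤ². -/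
def Muv (β γ u v : ℤ) : Matrix (Fin 3) (Fin 3) ℤ := M β γ (u^2 - v^2) (2*u*v) (u^2 + v^2)

theorem stmt_10 (β γ u v s t : ℤ) :
    Muv β γ u v * Muv β γ s t
      = Muv β γ (s*u + t*v*(1 - 2*γ)) (t*u + s*v + 2*β*t*v) := by
  ext i j
  fin_cases i <;> fin_cases j <;>
    simp [Muv, M, Matrix.mul_apply, Fin.sum_univ_three] <;> ring
end

section
/- The determinant of M_{β,γ}(u,v) := M_{β,γ}(u²−v², 2uv, u²+v²) equals (u² + 2βuv − (1−2γ)v²)³ for all u, v, β, γ ∈ ℤ. -/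
theorem stmt_11 (β γ u v : ℤ) :
    (M β γ (u^2 - v^2) (2*u*v) (u^2 + v^2)).det
      = (u^2 + 2*β*u*v - (1 - 2*γ)*v^2)^3 := by
  simp [M, Matrix.det_fin_three]; ring
end

section
/- Let φ(u,v) = (u²−v², 2uv, u²+v²). For (u,v), (s,t) on the conic u² + 2βuv − (1−2γ)v² = 1 with β, γ ∈ ℤ, φ is a morphism: φ((u,v) *_{β,γ} (s,t)) = M_{β,γ}(φ(u,v)).φ(s,t), where *_{β,γ}(u,v)(s,t) = (su + tv(1−2γ), tu + sv + 2βtv). -/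
def phi (u v : ℤ) : Fin 3 → ℤ := ![u^2 - v^2, 2*u*v, u^2 + v^2]

theorem stmt_18 (β γ u v s t : ℤ)
    (hu : u^2 + 2*β*u*v - (1 - 2*γ)*v^2 = 1)
    (hs : s^2 + 2*β*s*t - (1 - 2*γ)*t^2 = 1) :
    phi (s*u + t*v*(1 - 2*γ)) (t*u + s*v + 2*β*t*v)
      = (Mv β γ (phi u v)).mulVec (phi s t) := by
  funext i
  fin_cases i <;>
    simp [phi, Mv, M, Matrix.mulVec, dotProduct, Fin.sum_univ_three] <;>
    ring
end

section
/- If (u,v) ∈ ℤ² satisfies u² + 2βuv − (1−2γ)v² = 1 with β, γ ∈ ℤ, then M_{β,γ}(u²−v², 2uv, u²+v²).(( (u+2βv)²−v², −2v(u+2βv), (u+2βv)²+v² )) = (1, 0, 1); that is, φ(u+2βv, −v) is the inverse of the Pythagorean triple φ(u,v) under •_{β,γ}. -/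
theorem stmt_19 (β γ u v : ℤ) (h : u^2 + 2*β*u*v - (1 - 2*γ)*v^2 = 1) :
    (M β γ (u^2 - v^2) (2*u*v) (u^2 + v^2)).mulVec
      ![(u + 2*β*v)^2 - v^2, -2*v*(u + 2*β*v), (u + 2*β*v)^2 + v^2]
      = ![1, 0, 1] := by
  funext i
  fin_cases i <;>
    simp [M, Matrix.mulVec, dotProduct, Fin.sum_univ_three] <;>
    first
      | linear_combination (u^2 + 2*β*u*v + (2*γ-1)*v^2 + 1) * h
      | ring
end
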